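/- (Strip containment, part of Lemma 'inside'.) Let κ_1 < ... < κ_𝒩 (indices mod 𝒩), 𝑞̃_{ab}(q) = (κ_a − κ_b)(q_2 − (κ_a + κ_b)q_1 + κ_a κ_b), and fix m. Suppose q = (q_1, q_2) satisfies q_2 ≥ q_1² and 𝑞̃_{k+N_a,k}(q) ≥ 0 for all k = m, ..., m+N_b (indices mod 𝒩), with N_a < N_b. Then q_1 satisfies min_{m ≤ l ≤ m+N_b} κ_l ≤ q_1 ≤ max_{m ≤ l ≤ m+N_b} κ_l. -/

import Mathlib

open Finset

private lemma perZ (N : ℕ) (κ : ℤ → ℝ) (hper : ∀ n : ℤ, κ (n + N) = κ n) :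
    ∀ (c n : ℤ), κ (n + c * N) = κ n := by
  intro c
  induction c using Int.induction_on with
  | zero => intro n; simp
  | succ i ih =>
      intro n
      have h1 := hper (n + i * N)
      have h2 := ih n
      rw [show n + ((i : ℤ) + 1) * N = (n + i * N) + N by ring, h1, h2]
  | pred i ih =>
      intro n
      have h1 := hper (n + (-(i : ℤ) - 1) * N)
      rw [show n + (-(i : ℤ) - 1) * N + N = n + (-(i : ℤ)) * N by ring] at h1
      rw [← h1]
      exact ih n

/-- Strip containment: the polygon defined by the chord conditions lies in the
vertical strip determined by the extreme κ_l, l = m,…,m+N_b. -/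
theorem stmt_15 (Na Nb : ℕ) (hNa : 1 ≤ Na) (hNaNb : Na < Nb)
    (N : ℕ) (hN : N = Na + Nb)
    (κ : ℤ → ℝ)
    (hper : ∀ n : ℤ, κ (n + N) = κ n)
    (hmono : ∀ m n : ℤ, 1 ≤ m → m < n → n ≤ N → κ m < κ n)
    (m : ℤ) (q₁ q₂ : ℝ) (hpar : q₁ ^ 2 ≤ q₂)
    (hcond : ∀ k : ℤ, m ≤ k → k ≤ m + Nb →
      0 ≤ (κ (k + Na) - κ k) * (q₂ - (κ (k + Na) + κ k) * q₁ + κ (k + Na) * κ k)) :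
    (Finset.Icc m (m + (Nb : ℤ))).inf'
        (Finset.nonempty_Icc.mpr (by omega)) κ ≤ q₁ ∧
      q₁ ≤ (Finset.Icc m (m + (Nb : ℤ))).sup'
        (Finset.nonempty_Icc.mpr (by omega)) κ := by
  have hNZ : (N : ℤ) = (Na : ℤ) + (Nb : ℤ) := by exact_mod_cast congrArg (Nat.cast : ℕ → ℤ) hN
  have hNaZ : (1 : ℤ) ≤ (Na : ℤ) := by exact_mod_cast hNa
  have hNaNbZ : (Na : ℤ) < (Nb : ℤ) := by exact_mod_cast hNaNb
  have hκcong : ∀ a b : ℤ, (N : ℤ) ∣ (a - b) → κ a = κ b := by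
    rintro a b ⟨c, hc⟩
    have := perZ N κ hper c b
    rw [mul_comm] at hc
    rw [show a = b + c * N by omega]
    exact this
  have key : ∀ k : ℤ, m ≤ k → k ≤ m + Nb → κ (k + Na) < κ k →
      κ (k + Na) ≤ q₁ ∧ q₁ ≤ κ k := by
    intro k h1 h2 hab
    have h := hcond k h1 h2
    have hfle : q₂ - (κ (k + Na) + κ k) * q₁ + κ (k + Na) * κ k ≤ 0 := by
      nlinarith [h, hab]
    constructor <;> nlinarith [hfle, hpar, hab]
  by_cases hc : κ m < κ (m + Nb)
  · have heq : κ (m + Nb + Na) = κ m := by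
      apply hκcong; exact ⟨1, by rw [hNZ]; ring⟩
    obtain ⟨h1, h2⟩ := key (m + Nb) (by omega) le_rfl (by rw [heq]; exact hc)
    rw [heq] at h1
    constructor
    · exact le_trans (inf'_le κ (mem_Icc.mpr ⟨le_rfl, by omega⟩)) h1
    · exact le_trans h2 (le_sup' κ (mem_Icc.mpr ⟨by omega, le_rfl⟩))
  · push_neg at hc
    set t : ℤ := (m - 1) % N + 1 with ht
    have hN0 : (0 : ℤ) < N := by omega
    have ht1 : 1 ≤ t := by
      have := Int.emod_nonneg (m - 1) (by omega : (N : ℤ) ≠ 0); omega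
    have htN : t ≤ N := by
      have := Int.emod_lt_of_pos (m - 1) hN0; omega
    have hdvd : (N : ℤ) ∣ (m - t) := by
      have := Int.emod_emod_of_dvd (m - 1) (dvd_refl (N : ℤ))
      exact ⟨(m - 1) / N, by have := Int.mul_ediv_add_emod (m - 1) N; omega⟩
    have htNa : (Na : ℤ) + 1 ≤ t := by
      by_contra hlt
      push_neg at hlt
      have hle : t + Nb ≤ N := by omega
      have h1 : κ (m + Nb) = κ (t + Nb) := hκcong _ _ (by
        have : m + Nb - (t + Nb) = m - t := by ring
        rw [this]; exact hdvd)
      have h2 : κ m = κ t := hκcong _ _ hdvd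
      have := hmono t (t + Nb) ht1 (by omega) hle
      rw [← h1, ← h2] at this
      exact absurd this (not_lt.mpr hc)
    set k : ℤ := m + (N - t) with hk
    have hkmem1 : m ≤ k := by omega
    have hkmem2 : k ≤ m + Nb := by omega
    have hkN : κ k = κ N := hκcong _ _ (by
      have : k - N = m - t := by omega
      rw [this]; exact hdvd)
    have hkNa : κ (k + Na) = κ Na := hκcong _ _ (by
      have : k + Na - Na = m - t + N := by omega
      rw [this]; exact dvd_add hdvd (dvd_refl _))
    have hNaN : κ (Na : ℤ) < κ (N : ℤ) := hmono _ _ hNaZ (by omega) le_rfl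
    obtain ⟨h1, h2⟩ := key k hkmem1 hkmem2 (by rw [hkNa, hkN]; exact hNaN)
    rw [hkNa] at h1
    constructor
    · have hk1mem : k + 1 ∈ Finset.Icc m (m + (Nb : ℤ)) := mem_Icc.mpr ⟨by omega, by omega⟩
      have hk1 : κ (k + 1) = κ 1 := hκcong _ _ (by
        have : k + 1 - 1 = m - t + N := by omega
        rw [this]; exact dvd_add hdvd (dvd_refl _))
      have h1Na : κ (1 : ℤ) ≤ κ (Na : ℤ) := by
        rcases eq_or_lt_of_le hNaZ with h | h
        · rw [← h]
        · exact le_of_lt (hmono 1 Na le_rfl h (by omega))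
      calc (Finset.Icc m (m + (Nb : ℤ))).inf' _ κ ≤ κ (k + 1) := inf'_le κ hk1mem
        _ = κ 1 := hk1
        _ ≤ κ Na := h1Na
        _ ≤ q₁ := h1
    · exact le_trans h2 (hkN ▸ le_sup' κ (mem_Icc.mpr ⟨hkmem1, hkmem2⟩))
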